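/- Let G be a graph and T a tournament on the same N-element vertex set (N ≥ 2), let χ = χ(G), and let ℓ be an integer with 1 ≤ ℓ ≤ χ − 2. Then there exists a set U of at most ⌈⌈log₂ N⌉ / ⌊(χ − 2)/ℓ⌋⌉ vertices such that χ(G[N⁺_T(U)]) > ℓ. -/

import Mathlib

set_option linter.unusedSectionVars false


/-- A tournament on `V`: an orientation of the complete graph, i.e. an irreflexive
relation such that for distinct vertices exactly one direction is present. -/
def IsTournament {V : Type*} (r : V → V → Prop) : Prop :=
  (∀ v, ¬ r v v) ∧ ∀ u v : V, u ≠ v → (r u v ↔ ¬ r v u)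

section aux
variable {V : Type*} [Fintype V] [DecidableEq V]

lemma halve (r : V → V → Prop) [∀ a b, Decidable (r a b)]
    (hr : IsTournament r) {A : Finset V} (hA : A.Nonempty) :
    ∃ v ∈ A, 2 * (A.filter (fun u => ¬ r v u)).card ≤ A.card + 1 := by
  have key : ∃ v ∈ A, A.card ≤ 2 * (A.filter (fun u => r v u)).card + 1 := by
    by_contra hcon
    push_neg at hcon
    have h1 : ∀ v ∈ A, (A.filter (fun u => r v u)).card
        + (A.filter (fun u => r u v)).card = A.card - 1 := by
      intro v hv
      rw [Finset.card_filter, Finset.card_filter, ← Finset.sum_add_distrib]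
      have h2 : ∀ u ∈ A, ((if r v u then 1 else 0) + (if r u v then 1 else 0))
          = if u = v then 0 else 1 := by
        intro u hu
        by_cases huv : u = v
        · subst huv; simp [hr.1 u]
        · have := hr.2 v u (Ne.symm huv)
          by_cases h : r v u
          · simp [h, this.mp h, huv]
          · have : r u v := by
              by_contra h'
              exact h (this.mpr h')
            simp [h, this, huv]
      rw [Finset.sum_congr rfl h2, Finset.sum_ite, Finset.sum_const, Finset.sum_const]
      rw [Finset.filter_eq', if_pos hv]
      have : Finset.filter (fun u => ¬ u = v) A = A.erase v := by
        ext u; simp [Finset.mem_erase, and_comm]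
      rw [this, Finset.card_erase_of_mem hv]
      simp
    -- sum identity
    have hsum : ∑ v ∈ A, ((A.filter (fun u => r v u)).card
        + (A.filter (fun u => r u v)).card) = A.card * (A.card - 1) := by
      rw [Finset.sum_congr rfl h1, Finset.sum_const, smul_eq_mul]
    -- symmetric sums are equal
    have hswap : ∑ v ∈ A, (A.filter (fun u => r u v)).card
        = ∑ v ∈ A, (A.filter (fun u => r v u)).card := by
      simp only [Finset.card_filter]
      exact Finset.sum_comm
    have hS : 2 * ∑ v ∈ A, (A.filter (fun u => r v u)).card = A.card * (A.card - 1) := by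
      rw [two_mul]
      rw [← hsum, Finset.sum_add_distrib, hswap]
    -- upper bound from hcon
    obtain ⟨v₀, hv₀⟩ := hA
    have hc2 : 2 ≤ A.card := by
      have := hcon v₀ hv₀
      omega
    have hub : ∀ v ∈ A, 2 * (A.filter (fun u => r v u)).card ≤ A.card - 2 := by
      intro v hv; have := hcon v hv; omega
    have : 2 * ∑ v ∈ A, (A.filter (fun u => r v u)).card ≤ A.card * (A.card - 2) := by
      rw [Finset.mul_sum]
      calc ∑ v ∈ A, 2 * (A.filter (fun u => r v u)).card
          ≤ ∑ v ∈ A, (A.card - 2) := Finset.sum_le_sum hub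
        _ = A.card * (A.card - 2) := by rw [Finset.sum_const, smul_eq_mul]
    rw [hS] at this
    have hlt : A.card * (A.card - 2) < A.card * (A.card - 1) :=
      Nat.mul_lt_mul_of_le_of_lt (le_refl _) (by omega) (by omega)
    omega
  obtain ⟨v, hv, hcard⟩ := key
  refine ⟨v, hv, ?_⟩
  have := Finset.card_filter_add_card_filter_not (s := A) (p := fun u => r v u)
  have h3 := Finset.card_filter_le A (fun u => r v u)
  omega


set_option linter.unusedSectionVars false

lemma cover_aux (r : V → V → Prop) [∀ a b, Decidable (r a b)] (hr : IsTournament r) :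
    ∀ (s c : ℕ) (A : Finset V), A.card ≤ 2 ^ s * c →
      ∃ U : Finset V, U.card ≤ s ∧ (A.filter (fun u => ∀ v ∈ U, ¬ r v u)).card ≤ c := by
  intro s
  induction s with
  | zero =>
    intro c A hA
    refine ⟨∅, by simp, ?_⟩
    calc (A.filter (fun u => ∀ v ∈ (∅ : Finset V), ¬ r v u)).card
        ≤ A.card := Finset.card_filter_le _ _
      _ ≤ c := by simpa using hA
  | succ s ih =>
    intro c A hA
    rcases A.eq_empty_or_nonempty with h | h
    · exact ⟨∅, by simp, by simp [h]⟩
    · obtain ⟨v, hv, hcard⟩ := halve r hr h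
      set A' := A.filter (fun u => ¬ r v u) with hA'
      have hA'card : A'.card ≤ 2 ^ s * c := by
        have : 2 * A'.card ≤ 2 ^ (s + 1) * c + 1 := le_trans hcard (by omega)
        have h2 : 2 ^ (s + 1) * c = 2 * (2 ^ s * c) := by ring
        omega
      obtain ⟨U', hU'len, hU'⟩ := ih c A' hA'card
      refine ⟨insert v U', le_trans (Finset.card_insert_le _ _) (by omega), ?_⟩
      refine le_trans (Finset.card_le_card ?_) hU'
      intro u hu
      rw [Finset.mem_filter] at hu ⊢
      refine ⟨Finset.mem_filter.mpr ⟨hu.1, hu.2 v (Finset.mem_insert_self _ _)⟩, ?_⟩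
      exact fun w hw => hu.2 w (Finset.mem_insert_of_mem hw)

lemma cover_groups (r : V → V → Prop) [∀ a b, Decidable (r a b)] (hr : IsTournament r) :
    ∀ (j k : ℕ) (A : Finset V), A.card ≤ 2 ^ (k * j) →
      ∃ Us : List (Finset V), Us.length ≤ j ∧ (∀ U ∈ Us, U.card ≤ k) ∧
        (A.filter (fun u => ∀ U ∈ Us, ∀ v ∈ U, ¬ r v u)).card ≤ 1 := by
  intro j
  induction j with
  | zero =>
    intro k A hA
    refine ⟨[], by simp, by simp, ?_⟩
    calc (A.filter _).card ≤ A.card := Finset.card_filter_le _ _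
      _ ≤ 1 := by simpa using hA
  | succ j ih =>
    intro k A hA
    have hA2 : A.card ≤ 2 ^ k * 2 ^ (k * j) := by
      rw [← pow_add]
      calc A.card ≤ 2 ^ (k * (j + 1)) := hA
        _ = 2 ^ (k + k * j) := by ring_nf
    obtain ⟨U, hUk, hU⟩ := cover_aux r hr k (2 ^ (k * j)) A hA2
    obtain ⟨Us', hlen, hUsk, hUs⟩ := ih k _ hU
    refine ⟨U :: Us', by simpa using hlen, ?_, ?_⟩
    · intro W hW
      rcases List.mem_cons.mp hW with h | h
      · exact h ▸ hUk
      · exact hUsk W h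
    · refine le_trans (Finset.card_le_card ?_) hUs
      intro u hu
      rw [Finset.mem_filter] at hu ⊢
      refine ⟨Finset.mem_filter.mpr ⟨hu.1, fun v hv => hu.2 U List.mem_cons_self v hv⟩, ?_⟩
      exact fun W hW v hv => hu.2 W (List.mem_cons_of_mem _ hW) v hv

lemma cover_groups' (r : V → V → Prop) [∀ a b, Decidable (r a b)] (hr : IsTournament r)
    (j k : ℕ) (A : Finset V) (hA : A.card ≤ 2 ^ (k * j)) :
    ∃ Us : List (Finset V), Us.length ≤ j ∧ (∀ U ∈ Us, U.card ≤ k) ∧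
      ∀ x ∈ A, ∀ y ∈ A, (∀ U ∈ Us, ∀ v ∈ U, ¬ r v x) →
        (∀ U ∈ Us, ∀ v ∈ U, ¬ r v y) → x = y := by
  obtain ⟨Us, h1, h2, h3⟩ := cover_groups r hr j k A hA
  refine ⟨Us, h1, h2, fun x hx y hy hx' hy' => ?_⟩
  exact Finset.card_le_one.mp h3 x (Finset.mem_filter.mpr ⟨hx, hx'⟩)
    y (Finset.mem_filter.mpr ⟨hy, hy'⟩)

end aux

section color
variable {V : Type*}

lemma colorable_union (G : SimpleGraph V) {A B : Set V} {a b : ℕ}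
    (hA : (G.induce A).Colorable a) (hB : (G.induce B).Colorable b) :
    (G.induce (A ∪ B)).Colorable (a + b) := by
  classical
  obtain ⟨cA⟩ := hA
  obtain ⟨cB⟩ := hB
  refine ⟨SimpleGraph.Coloring.mk
    (fun u => if h : (u : V) ∈ A then Fin.castAdd b (cA ⟨u, h⟩)
      else Fin.natAdd a (cB ⟨u, u.2.resolve_left h⟩)) ?_⟩
  rintro ⟨u, hu⟩ ⟨v, hv⟩ hadj
  have hGadj : G.Adj u v := hadj
  dsimp only
  split_ifs with h1 h2 h2
  · intro hEq
    have : cA ⟨u, h1⟩ = cA ⟨v, h2⟩ := by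
      apply Fin.castAdd_injective
      exact hEq
    exact cA.valid (by exact hGadj) this
  · intro hEq
    have h3 := congrArg Fin.val hEq
    simp [Fin.castAdd, Fin.natAdd] at h3
    have := (cA ⟨u, h1⟩).isLt
    omega
  · intro hEq
    have h3 := congrArg Fin.val hEq
    simp [Fin.castAdd, Fin.natAdd] at h3
    have := (cA ⟨v, h2⟩).isLt
    omega
  · intro hEq
    have h3 := congrArg Fin.val hEq
    simp only [Fin.natAdd] at h3
    have h4 : cB ⟨u, hu.resolve_left h1⟩ = cB ⟨v, hv.resolve_left h2⟩ := Fin.ext (by omega)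
    exact cB.valid (by exact hGadj) h4

lemma colorable_subsingleton (G : SimpleGraph V) {B : Set V} (hB : B.Subsingleton) :
    (G.induce B).Colorable 1 := by
  refine ⟨SimpleGraph.Coloring.mk (fun _ => 0) ?_⟩
  rintro ⟨u, hu⟩ ⟨v, hv⟩ hadj
  have hGadj : G.Adj u v := hadj
  exact absurd (hB hu hv) hGadj.ne

lemma colorable_list (G : SimpleGraph V) (ℓ : ℕ) (r : V → V → Prop) :
    ∀ Us : List (Finset V),
      (∀ U ∈ Us, (G.induce {u | ∃ v ∈ U, r v u}).Colorable ℓ) →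
      ∀ B : Set V, (G.induce B).Colorable 1 →
      (G.induce (B ∪ {u | ∃ U ∈ Us, ∃ v ∈ U, r v u})).Colorable (1 + ℓ * Us.length) := by
  intro Us
  induction Us with
  | nil =>
    intro _ B hB
    have hset : (B ∪ {u | ∃ U ∈ ([] : List (Finset V)), ∃ v ∈ U, r v u}) = B := by
      ext u; simp
    rw [hset]
    simpa using hB
  | cons U₀ Us ih =>
    intro hcol B hB
    have hset : (B ∪ {u | ∃ U ∈ U₀ :: Us, ∃ v ∈ U, r v u})
        = (B ∪ {u | ∃ U ∈ Us, ∃ v ∈ U, r v u}) ∪ {u | ∃ v ∈ U₀, r v u} := by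
      ext u
      simp only [Set.mem_union, Set.mem_setOf_eq, List.mem_cons]
      constructor
      · rintro (h | ⟨W, (rfl | hW), hv⟩)
        · exact Or.inl (Or.inl h)
        · exact Or.inr hv
        · exact Or.inl (Or.inr ⟨W, hW, hv⟩)
      · rintro ((h | ⟨W, hW, hv⟩) | hv)
        · exact Or.inl h
        · exact Or.inr ⟨W, Or.inr hW, hv⟩
        · exact Or.inr ⟨U₀, Or.inl rfl, hv⟩
    rw [hset]
    have h1 := ih (fun U hU => hcol U (List.mem_cons_of_mem _ hU)) B hB
    have h2 := hcol U₀ List.mem_cons_self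
    have := colorable_union G h1 h2
    refine this.mono ?_
    simp [List.length_cons]
    ring_nf
    omega

end color


set_option maxHeartbeats 1000000 in
/-- Let G be a graph and T a tournament on the same N-element vertex
set (N ≥ 2), let χ = χ(G) and 1 ≤ ℓ ≤ χ − 2. Then there is a set U of at most
⌈⌈log₂ N⌉ / ⌊(χ − 2)/ℓ⌋⌉ vertices with χ(G[N⁺_T(U)]) > ℓ. (Note `(χ - 2) / ℓ`
is natural-number division, i.e. the floor ⌊(χ − 2)/ℓ⌋.) -/
theorem stmt_9 (N : ℕ) (hN : 2 ≤ N) (G : SimpleGraph (Fin N))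
    (r : Fin N → Fin N → Prop) (hr : IsTournament r)
    (χ ℓ : ℕ) (hχ : G.chromaticNumber = χ) (hℓ : 1 ≤ ℓ) (hℓχ : ℓ ≤ χ - 2) :
    ∃ U : Finset (Fin N),
      U.card ≤ ⌈((⌈Real.logb 2 N⌉₊ : ℝ)) / (((χ - 2) / ℓ : ℕ) : ℝ)⌉₊ ∧
      (ℓ : ℕ∞) < (G.induce {u | ∃ v ∈ U, r v u}).chromaticNumber := by
  classical
  haveI : ∀ a b : Fin N, Decidable (r a b) := fun _ _ => Classical.dec _
  by_contra hcon
  push_neg at hcon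
  set t : ℕ := ⌈Real.logb 2 N⌉₊ with ht
  set m : ℕ := (χ - 2) / ℓ with hm
  set K : ℕ := ⌈(t : ℝ) / (m : ℝ)⌉₊ with hK
  have hm1 : 1 ≤ m := (Nat.one_le_div_iff (by omega)).mpr hℓχ
  have hχ3 : 3 ≤ χ := by omega
  have hmℓ : m * ℓ ≤ χ - 2 := Nat.div_mul_le_self _ _
  -- N ≤ 2 ^ t
  have hNt : N ≤ 2 ^ t := by
    have hNpos : (0 : ℝ) < N := by exact_mod_cast (by omega : 0 < N)
    have h1 : (N : ℝ) = (2 : ℝ) ^ (Real.logb 2 N) :=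
      (Real.rpow_logb (by norm_num) (by norm_num) hNpos).symm
    have h2 : (2 : ℝ) ^ (Real.logb 2 N) ≤ (2 : ℝ) ^ (t : ℝ) :=
      Real.rpow_le_rpow_of_exponent_le (by norm_num) (Nat.le_ceil _)
    have h3 : (2 : ℝ) ^ (t : ℝ) = ((2 ^ t : ℕ) : ℝ) := by
      rw [Real.rpow_natCast]; push_cast; ring
    have h4 : (N : ℝ) ≤ ((2 ^ t : ℕ) : ℝ) := by rw [h1, ← h3]; exact h2
    exact_mod_cast h4
  -- t ≤ K * m
  have htKm : t ≤ K * m := by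
    have hmpos : (0 : ℝ) < m := by exact_mod_cast hm1
    have h1 : (t : ℝ) / (m : ℝ) ≤ K := Nat.le_ceil _
    have h2 : (t : ℝ) ≤ (K : ℝ) * m := by
      rw [div_le_iff₀ hmpos] at h1; exact h1
    exact_mod_cast h2
  have hN2 : (Finset.univ : Finset (Fin N)).card ≤ 2 ^ (K * m) := by
    rw [Finset.card_univ, Fintype.card_fin]
    exact le_trans hNt (Nat.pow_le_pow_right (by norm_num) htKm)
  obtain ⟨Us, hlen, hUk, hsub⟩ := cover_groups' r hr m K Finset.univ hN2
  have hcol : ∀ U ∈ Us, (G.induce {u | ∃ v ∈ U, r v u}).Colorable ℓ := by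
    intro U hU
    exact SimpleGraph.chromaticNumber_le_iff_colorable.mp (hcon U (hUk U hU))
  set B : Set (Fin N) := {u : Fin N | ∀ U ∈ Us, ∀ v ∈ U, ¬ r v u} with hB
  have hBsub : B.Subsingleton := by
    intro x hx y hy
    exact hsub x (Finset.mem_univ _) y (Finset.mem_univ _) hx hy
  have hall := colorable_list G ℓ r Us hcol B (colorable_subsingleton G hBsub)
  have huniv : (B ∪ {u | ∃ U ∈ Us, ∃ v ∈ U, r v u}) = Set.univ := by
    ext u
    simp only [Set.mem_union, Set.mem_univ, iff_true]
    by_cases h : ∃ U ∈ Us, ∃ v ∈ U, r v u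
    · exact Or.inr h
    · push_neg at h
      exact Or.inl h
  rw [huniv] at hall
  have hGcol : G.Colorable (1 + ℓ * Us.length) :=
    SimpleGraph.Colorable.of_hom (SimpleGraph.induceUnivIso G).symm.toEmbedding.toHom hall
  have hGcol2 : G.Colorable (1 + ℓ * m) :=
    hGcol.mono (Nat.add_le_add_left (Nat.mul_le_mul_left _ hlen) _)
  have hle := hGcol2.chromaticNumber_le
  rw [hχ] at hle
  have hfin : χ ≤ 1 + ℓ * m := by exact_mod_cast hle
  have : ℓ * m ≤ χ - 2 := by rw [mul_comm]; exact hmℓ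
  omega
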